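/- Let C be an extremal set in a finite simple connected graph Γ with antipodal set D. Then for every μ_l in the C-local spectrum, the C- and D-multiplicities satisfy m_C(μ_l)·m_D(μ_l) ≥ (π₀(C)²/π_l(C)²)·(‖ρC‖²·‖ρD‖²/‖ν‖⁴). -/

import Mathlib

open Finset Polynomial BigOperators
open scoped Classical

noncomputable section

/-- The eigenspace of a real matrix `A` (viewed as an operator on Euclidean space)
for the value `μ`. -/
def eigSp {n : ℕ} (A : Matrix (Fin n) (Fin n) ℝ) (μ : ℝ) :
    Submodule ℝ (EuclideanSpace ℝ (Fin n)) :=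
  Module.End.eigenspace (Matrix.toEuclideanLin A) μ

/-- Orthogonal projection onto the `μ`-eigenspace of `A`. -/
def eigProj {n : ℕ} (A : Matrix (Fin n) (Fin n) ℝ) (μ : ℝ) (v : EuclideanSpace ℝ (Fin n)) :
    EuclideanSpace ℝ (Fin n) :=
  ((eigSp A μ).orthogonalProjectionOnto v : EuclideanSpace ℝ (Fin n))

/-- The weighted characteristic vector `ρS = Σ_{i∈S} ν_i e_i`. -/
def rho {n : ℕ} (ν : EuclideanSpace ℝ (Fin n)) (S : Finset (Fin n)) :
    EuclideanSpace ℝ (Fin n) :=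
  WithLp.toLp 2 (fun i => if i ∈ S then ν i else 0)

/-- The unit vector `e_S = ρS / ‖ρS‖`. -/
def unitVec {n : ℕ} (ν : EuclideanSpace ℝ (Fin n)) (S : Finset (Fin n)) :
    EuclideanSpace ℝ (Fin n) :=
  (‖rho ν S‖)⁻¹ • rho ν S

/-- The `S`-local multiplicity of `μ`: `m_S(μ) = ‖E_μ e_S‖²`. -/
def mloc {n : ℕ} (A : Matrix (Fin n) (Fin n) ℝ) (ν : EuclideanSpace ℝ (Fin n))
    (S : Finset (Fin n)) (μ : ℝ) : ℝ :=
  ‖eigProj A μ (unitVec ν S)‖ ^ 2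

/-- The `S`-local spectrum: the set of `μ` whose eigenspace sees `ρS`. -/
def evloc {n : ℕ} (A : Matrix (Fin n) (Fin n) ℝ) (ν : EuclideanSpace ℝ (Fin n))
    (S : Finset (Fin n)) : Set ℝ :=
  {μ | eigProj A μ (rho ν S) ≠ 0}

/-- Distance from a vertex `i` to a set of vertices `S`. -/
def dSet {n : ℕ} (G : SimpleGraph (Fin n)) (S : Finset (Fin n)) (i : Fin n) : ℕ :=
  sInf {k | ∃ j ∈ S, G.dist i j = k}

/-- Eccentricity (covering radius) of a vertex set `S`. -/
def eccS {n : ℕ} (G : SimpleGraph (Fin n)) (S : Finset (Fin n)) : ℕ :=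
  Finset.univ.sup (dSet G S)

/-- The `k`-th subconstituent `S_k = {i : dist(i,S) = k}`. -/
def subcons {n : ℕ} (G : SimpleGraph (Fin n)) (S : Finset (Fin n)) (k : ℕ) :
    Finset (Fin n) :=
  Finset.univ.filter (fun i => dSet G S i = k)

/-- `p(A)·v` for a polynomial `p`, a matrix `A` and a Euclidean vector `v`. -/
def aevalVec {n : ℕ} (A : Matrix (Fin n) (Fin n) ℝ) (p : Polynomial ℝ)
    (v : EuclideanSpace ℝ (Fin n)) : EuclideanSpace ℝ (Fin n) :=
  WithLp.toLp 2 ((Polynomial.aeval A p).mulVec v)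

/-- Moment-like parameter `π_l = ∏_{h≠l} |μ_l − μ_h|` for an enumeration `μ`. -/
def piC {d : ℕ} (μ : Fin (d + 1) → ℝ) (l : Fin (d + 1)) : ℝ :=
  ∏ h ∈ Finset.univ.erase l, |μ l - μ h|


open scoped RealInnerProductSpace

section specAux
variable {n : ℕ}


/-- `A.mulVec` as a map on Euclidean space. -/
def mv (A : Matrix (Fin n) (Fin n) ℝ) (v : EuclideanSpace ℝ (Fin n)) : EuclideanSpace ℝ (Fin n) :=
  WithLp.toLp 2 (A.mulVec v)

lemma mem_eigSp {A : Matrix (Fin n) (Fin n) ℝ} {κ : ℝ} {u : EuclideanSpace ℝ (Fin n)} :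
    u ∈ eigSp A κ ↔ mv A u = κ • u := by
  rw [eigSp, Module.End.mem_eigenspace_iff]; rfl

lemma euclid_inner_eq (x y : EuclideanSpace ℝ (Fin n)) : ⟪x, y⟫ = ∑ i, x i * y i := by
  simp [PiLp.inner_apply, RCLike.inner_apply, conj_trivial]
  exact Finset.sum_congr rfl fun i _ => mul_comm _ _

lemma inner_mv_symm {A : Matrix (Fin n) (Fin n) ℝ} (hs : A.IsSymm)
    (x y : EuclideanSpace ℝ (Fin n)) :
    ⟪mv A x, y⟫ = ⟪x, mv A y⟫ := by
  simp only [euclid_inner_eq]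
  show ∑ i, (∑ j, A i j * x j) * y i = ∑ i, x i * ∑ j, A i j * y j
  calc ∑ i, (∑ j, A i j * x j) * y i
      = ∑ i, ∑ j, A i j * x j * y i := by simp [Finset.sum_mul]
    _ = ∑ j, ∑ i, A i j * x j * y i := Finset.sum_comm
    _ = ∑ j, x j * ∑ i, A j i * y i := by
        apply Finset.sum_congr rfl; intro j _
        rw [Finset.mul_sum]
        apply Finset.sum_congr rfl; intro i _
        rw [hs.apply j i]; ring

section spectral
variable {A : Matrix (Fin n) (Fin n) ℝ} (hA : A.IsHermitian)

lemma herm_isSymm (hA : A.IsHermitian) : A.IsSymm :=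
  Matrix.IsSymm.ext fun i j => by
    simpa [Matrix.conjTranspose_apply] using congrFun (congrFun hA i) j

lemma mv_basis (i : Fin n) :
    mv A (hA.eigenvectorBasis i) = hA.eigenvalues i • (hA.eigenvectorBasis i : EuclideanSpace ℝ (Fin n)) :=
  congrArg (WithLp.toLp 2) (hA.mulVec_eigenvectorBasis i)

lemma basis_mem_eigSp (i : Fin n) :
    (hA.eigenvectorBasis i : EuclideanSpace ℝ (Fin n)) ∈ eigSp A (hA.eigenvalues i) :=
  mem_eigSp.2 (mv_basis hA i)

lemma inner_basis_eq_zero {κ : ℝ} {w : EuclideanSpace ℝ (Fin n)} (hw : w ∈ eigSp A κ)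
    {i : Fin n} (hi : hA.eigenvalues i ≠ κ) :
    ⟪(hA.eigenvectorBasis i : EuclideanSpace ℝ (Fin n)), w⟫ = 0 := by
  have hmul : mv A w = κ • w := mem_eigSp.1 hw
  have h1 : ⟪(hA.eigenvectorBasis i : EuclideanSpace ℝ (Fin n)), mv A w⟫
      = κ * ⟪(hA.eigenvectorBasis i : EuclideanSpace ℝ (Fin n)), w⟫ := by
    rw [hmul]; exact real_inner_smul_right _ _ _
  have h2 : ⟪(hA.eigenvectorBasis i : EuclideanSpace ℝ (Fin n)), mv A w⟫
      = hA.eigenvalues i * ⟪(hA.eigenvectorBasis i : EuclideanSpace ℝ (Fin n)), w⟫ := by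
    rw [← inner_mv_symm (herm_isSymm hA), mv_basis hA i]
    exact real_inner_smul_left _ _ _
  rcases mul_eq_mul_right_iff.mp (h1.symm.trans h2) with h | h
  · exact absurd h.symm hi
  · exact h

lemma eigProj_eq_sum (κ : ℝ) (v : EuclideanSpace ℝ (Fin n)) :
    eigProj A κ v = ∑ i ∈ Finset.univ.filter (fun i => hA.eigenvalues i = κ),
      ⟪(hA.eigenvectorBasis i : EuclideanSpace ℝ (Fin n)), v⟫ • (hA.eigenvectorBasis i : EuclideanSpace ℝ (Fin n)) := by
  rw [eigProj, Submodule.coe_orthogonalProjectionOnto_apply]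
  apply Submodule.eq_starProjection_of_mem_of_inner_eq_zero
  · apply Submodule.sum_mem
    intro i hi
    apply Submodule.smul_mem
    have h := (Finset.mem_filter.1 hi).2
    simpa [h] using basis_mem_eigSp hA i
  · intro w hw
    have hv : v = ∑ i, ⟪(hA.eigenvectorBasis i : EuclideanSpace ℝ (Fin n)), v⟫ • (hA.eigenvectorBasis i : EuclideanSpace ℝ (Fin n)) :=
      (hA.eigenvectorBasis.sum_repr' v).symm
    rw [inner_sub_left]
    nth_rewrite 1 [hv]
    rw [← Finset.sum_filter_add_sum_filter_not Finset.univ (fun i => hA.eigenvalues i = κ),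
      inner_add_left, add_sub_cancel_left, sum_inner]
    apply Finset.sum_eq_zero
    intro i hi
    rw [real_inner_smul_left, inner_basis_eq_zero hA hw (Finset.mem_filter.1 hi).2, mul_zero]

lemma eigProj_sum_decomp (v : EuclideanSpace ℝ (Fin n)) :
    ∑ κ ∈ Finset.univ.image hA.eigenvalues, eigProj A κ v = v := by
  calc ∑ κ ∈ Finset.univ.image hA.eigenvalues, eigProj A κ v
      = ∑ κ ∈ Finset.univ.image hA.eigenvalues, ∑ i ∈ Finset.univ.filter (fun i => hA.eigenvalues i = κ),
          ⟪(hA.eigenvectorBasis i : EuclideanSpace ℝ (Fin n)), v⟫ • (hA.eigenvectorBasis i : EuclideanSpace ℝ (Fin n)) :=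
        Finset.sum_congr rfl fun κ _ => eigProj_eq_sum hA κ v
    _ = ∑ i, ⟪(hA.eigenvectorBasis i : EuclideanSpace ℝ (Fin n)), v⟫ • (hA.eigenvectorBasis i : EuclideanSpace ℝ (Fin n)) := by
        rw [Finset.sum_fiberwise_eq_sum_filter]
        apply Finset.sum_congr
        · ext i; simp
        · intros; rfl
    _ = v := hA.eigenvectorBasis.sum_repr' v

lemma eigProj_mem (κ : ℝ) (v : EuclideanSpace ℝ (Fin n)) : eigProj A κ v ∈ eigSp A κ :=
  ((eigSp A κ).orthogonalProjectionOnto v).2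

lemma eigProj_ne_imp_mem {κ : ℝ} {v : EuclideanSpace ℝ (Fin n)} (h : eigProj A κ v ≠ 0) :
    κ ∈ Finset.univ.image hA.eigenvalues := by
  by_contra hk
  apply h
  rw [eigProj_eq_sum hA]
  have he : Finset.univ.filter (fun i => hA.eigenvalues i = κ) = ∅ := by
    apply Finset.filter_eq_empty_iff.2
    intro i _ hcon
    exact hk (hcon ▸ Finset.mem_image_of_mem _ (Finset.mem_univ i))
  rw [he, Finset.sum_empty]

end spectral

-- mv already defined
lemma mv_sum (A : Matrix (Fin n) (Fin n) ℝ) {ι : Type*} (s : Finset ι)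
    (f : ι → EuclideanSpace ℝ (Fin n)) : mv A (∑ i ∈ s, f i) = ∑ i ∈ s, mv A (f i) :=
  map_sum (Matrix.toEuclideanLin A) f s

lemma mv_smul (A : Matrix (Fin n) (Fin n) ℝ) (c : ℝ) (v : EuclideanSpace ℝ (Fin n)) :
    mv A (c • v) = c • mv A v :=
  map_smul (Matrix.toEuclideanLin A) c v

lemma mv_pow_eig {A : Matrix (Fin n) (Fin n) ℝ} {κ : ℝ} {u : EuclideanSpace ℝ (Fin n)}
    (h : mv A u = κ • u) : ∀ k : ℕ, mv (A ^ k) u = (κ ^ k) • u := by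
  intro k
  induction k with
  | zero => simp [mv, Matrix.one_mulVec]
  | succ k ih =>
    have : mv (A ^ (k+1)) u = mv (A ^ k) (mv A u) := by
      show WithLp.toLp 2 ((A ^ (k+1)).mulVec u) = WithLp.toLp 2 ((A ^ k).mulVec (A.mulVec u))
      rw [pow_succ, ← Matrix.mulVec_mulVec]
    rw [this, h, mv_smul, ih, smul_smul, pow_succ]
    ring_nf

lemma mv_aeval_eig {A : Matrix (Fin n) (Fin n) ℝ} {κ : ℝ} {u : EuclideanSpace ℝ (Fin n)}
    (h : mv A u = κ • u) (p : Polynomial ℝ) :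
    mv (Polynomial.aeval A p) u = p.eval κ • u := by
  induction p using Polynomial.induction_on' with
  | add p q hp hq =>
    have : mv (Polynomial.aeval A (p + q)) u = mv (Polynomial.aeval A p) u + mv (Polynomial.aeval A q) u := by
      show WithLp.toLp 2 (((Polynomial.aeval A) (p+q)).mulVec u) = _
      rw [map_add, Matrix.add_mulVec]; rfl
    rw [this, hp, hq, eval_add, add_smul]
  | monomial k c =>
    have : (Polynomial.aeval A) (monomial k c) = c • A ^ k := by
      rw [aeval_monomial, Algebra.algebraMap_eq_smul_one, smul_mul_assoc, one_mul]
    rw [this]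
    show WithLp.toLp 2 ((c • A ^ k).mulVec u) = _
    rw [Matrix.smul_mulVec]
    have := mv_pow_eig h k
    show WithLp.toLp 2 (c • ((A ^ k).mulVec u)) = _
    rw [show WithLp.toLp 2 (c • ((A ^ k).mulVec u)) = c • mv (A^k) u from rfl, this,
      smul_smul, eval_monomial]

lemma eigProj_mem' (A : Matrix (Fin n) (Fin n) ℝ) (κ : ℝ) (v : EuclideanSpace ℝ (Fin n)) :
    eigProj A κ v ∈ eigSp A κ :=
  ((eigSp A κ).orthogonalProjectionOnto v).2

lemma inner_eigProj_right (A : Matrix (Fin n) (Fin n) ℝ) (κ : ℝ) (v w : EuclideanSpace ℝ (Fin n)) :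
    ⟪eigProj A κ v, w⟫ = ⟪eigProj A κ v, eigProj A κ w⟫ := by
  have horth : w - eigProj A κ w ∈ (eigSp A κ)ᗮ := Submodule.sub_starProjection_mem_orthogonal w
  have h0 : ⟪eigProj A κ v, w - eigProj A κ w⟫ = 0 :=
    (Submodule.mem_orthogonal _ _).1 horth _ (eigProj_mem' A κ v)
  rw [inner_sub_right] at h0
  linarith

end specAux
section graphAux
variable {n : ℕ}

lemma walk_dist {G : SimpleGraph (Fin n)} [DecidableRel G.Adj] {k : ℕ} {i j : Fin n}
    (h : (G.adjMatrix ℝ ^ k) i j ≠ 0) : G.dist i j ≤ k := by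
  rw [SimpleGraph.adjMatrix_pow_apply_eq_card_walk] at h
  have hcard : Fintype.card { p : G.Walk i j | p.length = k } ≠ 0 := by
    intro h0; rw [h0] at h; simp at h
  obtain ⟨⟨p, hp⟩⟩ := Fintype.card_pos_iff.1 (Nat.pos_of_ne_zero hcard)
  calc G.dist i j ≤ p.length := SimpleGraph.dist_le p
    _ = k := hp

lemma dSet_le {G : SimpleGraph (Fin n)} {S : Finset (Fin n)} {i j : Fin n} (hj : j ∈ S) :
    dSet G S i ≤ G.dist i j :=
  Nat.sInf_le ⟨j, hj, rfl⟩

lemma dSet_attained {G : SimpleGraph (Fin n)} {S : Finset (Fin n)} (hS : S.Nonempty) (i : Fin n) :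
    ∃ j ∈ S, G.dist i j = dSet G S i := by
  obtain ⟨j0, hj0⟩ := hS
  have : dSet G S i ∈ {k | ∃ j ∈ S, G.dist i j = k} := Nat.sInf_mem ⟨_, j0, hj0, rfl⟩
  exact this

/-- For `j` in the `d`-th subconstituent and `i ∈ C`, short powers of the adjacency
matrix vanish. -/
lemma adj_pow_zero {G : SimpleGraph (Fin n)} [DecidableRel G.Adj] {C : Finset (Fin n)}
    {d k : ℕ} (hk : k < d) {i j : Fin n} (hi : i ∈ C) (hj : j ∈ subcons G C d) :
    (G.adjMatrix ℝ ^ k) j i = 0 := by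
  by_contra h
  have h1 : G.dist j i ≤ k := walk_dist h
  have h2 : dSet G C j = d := (Finset.mem_filter.1 hj).2
  have h3 : d ≤ G.dist j i := h2 ▸ dSet_le hi
  omega

lemma subcons_nonempty {G : SimpleGraph (Fin n)} (hn : 0 < n) (C : Finset (Fin n)) :
    (subcons G C (eccS G C)).Nonempty := by
  have huniv : (Finset.univ : Finset (Fin n)).Nonempty := ⟨⟨0, hn⟩, Finset.mem_univ _⟩
  obtain ⟨i, _, hi⟩ := Finset.exists_mem_eq_sup Finset.univ huniv (dSet G C)
  exact ⟨i, Finset.mem_filter.2 ⟨Finset.mem_univ i, hi.symm⟩⟩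

end graphAux

section perron
variable {n : ℕ} {G : SimpleGraph (Fin n)} [DecidableRel G.Adj]
  {ν : EuclideanSpace ℝ (Fin n)} {lam0 : ℝ}

lemma eigSp_lam0_eq_span (hn : 0 < n) (hconn : G.Connected) (hν : ∀ i, 0 < ν i)
    (hPerron : (G.adjMatrix ℝ).mulVec ν = lam0 • ν) :
    eigSp (G.adjMatrix ℝ) lam0 = Submodule.span ℝ {ν} := by
  apply le_antisymm
  · intro u hu
    have hmu : (G.adjMatrix ℝ).mulVec u = lam0 • u := congrArg WithLp.ofLp (mem_eigSp.1 hu)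
    have hne : (Finset.univ : Finset (Fin n)).Nonempty := ⟨⟨0, hn⟩, Finset.mem_univ _⟩
    obtain ⟨i0, _, hi0⟩ := Finset.exists_min_image Finset.univ (fun i => u i / ν i) hne
    set c := u i0 / ν i0 with hc
    set w : Fin n → ℝ := fun i => u i - c * ν i with hwdef
    have hw0 : ∀ i, 0 ≤ w i := by
      intro i
      have h1 : c ≤ u i / ν i := hi0 i (Finset.mem_univ i)
      have h2 : c * ν i ≤ u i := by
        rw [← le_div_iff₀ (hν i)]; exact h1
      simp only [hwdef]; linarith
    have hwi0 : w i0 = 0 := by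
      simp [hwdef, hc, div_mul_cancel₀ _ (ne_of_gt (hν i0))]
    have hww : (G.adjMatrix ℝ).mulVec w = lam0 • w := by
      have : w = fun i => u i - (c • ν) i := rfl
      rw [this]
      have hsub : (fun i => u i - (c • ν) i) = (u - c • (ν : Fin n → ℝ)) := rfl
      rw [hsub, Matrix.mulVec_sub, hmu, Matrix.mulVec_smul]
      rw [show (G.adjMatrix ℝ).mulVec ν = lam0 • (ν : Fin n → ℝ) from hPerron]
      funext i
      simp [smul_eq_mul]; ring
    have step : ∀ x, w x = 0 → ∀ y, G.Adj x y → w y = 0 := by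
      intro x hx y hxy
      have hsum : ∑ j, (G.adjMatrix ℝ) x j * w j = 0 := by
        have := congrFun hww x
        simp only [Matrix.mulVec, dotProduct, Pi.smul_apply, smul_eq_mul] at this
        rw [this, hx, mul_zero]
      have hnonneg : ∀ j ∈ Finset.univ, 0 ≤ (G.adjMatrix ℝ) x j * w j := by
        intro j _
        apply mul_nonneg _ (hw0 j)
        simp [SimpleGraph.adjMatrix_apply]
        split <;> norm_num
      have := (Finset.sum_eq_zero_iff_of_nonneg hnonneg).1 hsum y (Finset.mem_univ y)
      rw [SimpleGraph.adjMatrix_apply, if_pos hxy, one_mul] at this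
      exact this
    have walkzero : ∀ x y : Fin n, G.Walk x y → w x = 0 → w y = 0 := by
      intro x y p
      induction p with
      | nil => exact fun h => h
      | cons h p ih => intro hx; exact ih (step _ hx _ h)
    have hwall : ∀ j, w j = 0 := fun j =>
      (hconn.preconnected i0 j).elim fun p => walkzero _ _ p hwi0
    have : u = c • ν := by
      ext i
      have := hwall i
      simp only [hwdef] at this
      show u i = c * ν i
      linarith
    exact Submodule.mem_span_singleton.2 ⟨c, this.symm⟩
  · rw [Submodule.span_le, Set.singleton_subset_iff]
    exact mem_eigSp.2 (congrArg (WithLp.toLp 2) hPerron)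

lemma starProj_congr {K L : Submodule ℝ (EuclideanSpace ℝ (Fin n))} [K.HasOrthogonalProjection]
    [L.HasOrthogonalProjection] (h : K = L) (v : EuclideanSpace ℝ (Fin n)) :
    K.starProjection v = L.starProjection v := by
  subst h; rfl

lemma eigProj_lam0 (hn : 0 < n) (hconn : G.Connected) (hν : ∀ i, 0 < ν i)
    (hPerron : (G.adjMatrix ℝ).mulVec ν = lam0 • ν) (v : EuclideanSpace ℝ (Fin n)) :
    eigProj (G.adjMatrix ℝ) lam0 v = (⟪ν, v⟫ / ‖ν‖ ^ 2) • ν := by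
  rw [eigProj, Submodule.coe_orthogonalProjectionOnto_apply,
    starProj_congr (eigSp_lam0_eq_span hn hconn hν hPerron)]
  exact Submodule.starProjection_singleton ℝ v

lemma eig_le_lam0 (hn : 0 < n) (hν : ∀ i, 0 < ν i)
    (hPerron : (G.adjMatrix ℝ).mulVec ν = lam0 • ν) {κ : ℝ} {u : EuclideanSpace ℝ (Fin n)}
    (hu : u ∈ eigSp (G.adjMatrix ℝ) κ) (hune : u ≠ 0) : κ ≤ lam0 := by
  have hmu : (G.adjMatrix ℝ).mulVec u = κ • u := congrArg WithLp.ofLp (mem_eigSp.1 hu)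
  have hne : (Finset.univ : Finset (Fin n)).Nonempty := ⟨⟨0, hn⟩, Finset.mem_univ _⟩
  obtain ⟨i1, _, hi1⟩ := Finset.exists_max_image Finset.univ (fun i => |u i| / ν i) hne
  set c := |u i1| / ν i1 with hcdef
  have hc : ∀ j, |u j| ≤ c * ν j := fun j =>
    (div_le_iff₀ (hν j)).1 (hi1 j (Finset.mem_univ j))
  have hex : ∃ j, u j ≠ 0 := by
    by_contra hno
    push_neg at hno
    exact hune (by ext j; simpa using hno j)
  obtain ⟨j0, hj0⟩ := hex
  have hcpos : 0 < c := by
    have h1 : 0 < |u j0| / ν j0 := div_pos (abs_pos.2 hj0) (hν j0)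
    exact lt_of_lt_of_le h1 (hi1 j0 (Finset.mem_univ j0))
  have hui1 : |u i1| = c * ν i1 := by
    rw [hcdef]; exact (div_mul_cancel₀ _ (ne_of_gt (hν i1))).symm
  have hXpos : 0 < |u i1| := by
    rw [hui1]; exact mul_pos hcpos (hν i1)
  have hentry : ∀ a b, 0 ≤ G.adjMatrix ℝ a b := by
    intro a b; simp [SimpleGraph.adjMatrix_apply]; split <;> norm_num
  have habs : |κ| * |u i1| ≤ lam0 * |u i1| := by
    have h0 : κ * u i1 = ∑ j, G.adjMatrix ℝ i1 j * u j := by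
      have := congrFun hmu i1
      simp only [Matrix.mulVec, dotProduct, Pi.smul_apply, smul_eq_mul] at this
      exact this.symm
    have h1 : |κ| * |u i1| = |∑ j, G.adjMatrix ℝ i1 j * u j| := by
      rw [← abs_mul, h0]
    have h2 : |∑ j, G.adjMatrix ℝ i1 j * u j| ≤ ∑ j, G.adjMatrix ℝ i1 j * |u j| := by
      refine le_trans (Finset.abs_sum_le_sum_abs _ _) ?_
      apply Finset.sum_le_sum
      intro j _
      rw [abs_mul, abs_of_nonneg (hentry i1 j)]
    have h3 : ∑ j, G.adjMatrix ℝ i1 j * |u j| ≤ ∑ j, G.adjMatrix ℝ i1 j * (c * ν j) := by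
      apply Finset.sum_le_sum
      intro j _
      exact mul_le_mul_of_nonneg_left (hc j) (hentry i1 j)
    have h4 : ∑ j, G.adjMatrix ℝ i1 j * (c * ν j) = c * (lam0 * ν i1) := by
      have hνi : ∑ j, G.adjMatrix ℝ i1 j * ν j = lam0 * ν i1 := by
        have := congrFun hPerron i1
        simp only [Matrix.mulVec, dotProduct, Pi.smul_apply, smul_eq_mul] at this
        exact this
      rw [← hνi, Finset.mul_sum]
      apply Finset.sum_congr rfl
      intro j _; ring
    calc |κ| * |u i1| = |∑ j, G.adjMatrix ℝ i1 j * u j| := h1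
      _ ≤ ∑ j, G.adjMatrix ℝ i1 j * |u j| := h2
      _ ≤ ∑ j, G.adjMatrix ℝ i1 j * (c * ν j) := h3
      _ = c * (lam0 * ν i1) := h4
      _ = lam0 * (c * ν i1) := by ring
      _ = lam0 * |u i1| := by rw [hui1]
  have : |κ| ≤ lam0 := le_of_mul_le_mul_right habs hXpos
  exact le_trans (le_abs_self κ) this

end perron

section mainAux
variable {n : ℕ}

lemma inner_aeval_decomp {A : Matrix (Fin n) (Fin n) ℝ} (hA : A.IsHermitian)
    (p : Polynomial ℝ) (v w : EuclideanSpace ℝ (Fin n)) :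
    ⟪mv (Polynomial.aeval A p) v, w⟫ =
      ∑ κ ∈ Finset.univ.image hA.eigenvalues, p.eval κ * ⟪eigProj A κ v, eigProj A κ w⟫ := by
  have h1 : mv (Polynomial.aeval A p) v
      = ∑ κ ∈ Finset.univ.image hA.eigenvalues, p.eval κ • eigProj A κ v := by
    conv_lhs => rw [← eigProj_sum_decomp hA v]
    rw [mv_sum]
    exact Finset.sum_congr rfl fun κ _ => mv_aeval_eig (mem_eigSp.1 (eigProj_mem' A κ v)) p
  rw [h1, sum_inner]
  exact Finset.sum_congr rfl fun κ _ => by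
    rw [real_inner_smul_left, inner_eigProj_right]

lemma eigProj_smul (A : Matrix (Fin n) (Fin n) ℝ) (κ c : ℝ) (v : EuclideanSpace ℝ (Fin n)) :
    eigProj A κ (c • v) = c • eigProj A κ v := by
  simp only [eigProj, map_smul, Submodule.coe_smul]

lemma inner_pow_vanish {G : SimpleGraph (Fin n)} [DecidableRel G.Adj]
    (ν : EuclideanSpace ℝ (Fin n)) {C : Finset (Fin n)} {d k : ℕ} (hk : k < d) :
    ⟪mv (G.adjMatrix ℝ ^ k) (rho ν C), rho ν (subcons G C d)⟫ = 0 := by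
  rw [euclid_inner_eq]
  apply Finset.sum_eq_zero
  intro j _
  by_cases hj : j ∈ subcons G C d
  · have hz : (mv (G.adjMatrix ℝ ^ k) (rho ν C)) j = 0 := by
      show ∑ i, (G.adjMatrix ℝ ^ k) j i * rho ν C i = 0
      apply Finset.sum_eq_zero
      intro i _
      by_cases hi : i ∈ C
      · rw [adj_pow_zero hk hi hj, zero_mul]
      · rw [show rho ν C i = 0 from if_neg hi, mul_zero]
    rw [hz, zero_mul]
  · rw [show rho ν (subcons G C d) j = 0 from if_neg hj, mul_zero]

lemma inner_monic_pow {A : Matrix (Fin n) (Fin n) ℝ} {p : Polynomial ℝ} {d : ℕ}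
    (hp : p.Monic) (hdeg : p.natDegree = d) (v w : EuclideanSpace ℝ (Fin n))
    (hvanish : ∀ k < d, ⟪mv (A ^ k) v, w⟫ = 0) :
    ⟪mv (Polynomial.aeval A p) v, w⟫ = ⟪mv (A ^ d) v, w⟫ := by
  have hsum : mv (Polynomial.aeval A p) v
      = ∑ k ∈ Finset.range (d + 1), p.coeff k • mv (A ^ k) v := by
    have h1 : Polynomial.aeval A p = ∑ k ∈ Finset.range (d + 1), p.coeff k • A ^ k := by
      rw [Polynomial.aeval_eq_sum_range, hdeg]
    show Matrix.toEuclideanLin (Polynomial.aeval A p) v = _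
    rw [h1, map_sum, LinearMap.sum_apply]
    exact Finset.sum_congr rfl fun k _ => by rw [map_smul, LinearMap.smul_apply]; rfl
  rw [hsum, sum_inner, Finset.sum_range_succ]
  have h0 : ∀ k ∈ Finset.range d, ⟪p.coeff k • mv (A ^ k) v, w⟫ = 0 := by
    intro k hk
    rw [real_inner_smul_left, hvanish k (Finset.mem_range.1 hk), mul_zero]
  rw [Finset.sum_eq_zero h0, zero_add, real_inner_smul_left, ← hdeg, hp.coeff_natDegree, one_mul]

end mainAux

theorem multiplicity_product_inequality {n : ℕ} (hn : 0 < n) (G : SimpleGraph (Fin n)) [DecidableRel G.Adj]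
    (hconn : G.Connected)
    (ν : EuclideanSpace ℝ (Fin n)) (hν : ∀ i, 0 < ν i) (lam0 : ℝ)
    (hPerron : (G.adjMatrix ℝ).mulVec ν = lam0 • ν)
    (C : Finset (Fin n)) (hC : C.Nonempty)
    (d : ℕ) (μ : Fin (d + 1) → ℝ) (hμa : StrictAnti μ)
    (hμr : Set.range μ = evloc (G.adjMatrix ℝ) ν C)
    (hext : eccS G C = d) :
    ∀ l : Fin (d + 1),
      (piC μ 0) ^ 2 / (piC μ l) ^ 2 *
        (‖rho ν C‖ ^ 2 * ‖rho ν (subcons G C (eccS G C))‖ ^ 2 / ‖ν‖ ^ 4)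
      ≤ mloc (G.adjMatrix ℝ) ν C (μ l) *
          mloc (G.adjMatrix ℝ) ν (subcons G C (eccS G C)) (μ l) := by
  intro l
  rw [hext]
  set A := G.adjMatrix ℝ with hAdef
  have hA : A.IsHermitian := by
    rw [hAdef, Matrix.IsHermitian]
    ext i j
    simp [Matrix.conjTranspose_apply, SimpleGraph.adjMatrix_apply, SimpleGraph.adj_comm]
  set D := subcons G C d with hDdef
  have hD : D.Nonempty := by
    have := subcons_nonempty hn (G := G) C
    rwa [hext] at this
  set ρC := rho ν C with hρCdef
  set ρD := rho ν D with hρDdef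
  have hν0 : ν ≠ 0 := by
    intro h
    have := hν ⟨0, hn⟩
    rw [h] at this
    simp at this
  have hρ_ne : ∀ (S : Finset (Fin n)), S.Nonempty → rho ν S ≠ 0 := by
    rintro S ⟨i, hi⟩ h
    have h2 : ν i = 0 := by simpa [rho, hi] using congrArg (fun x : EuclideanSpace ℝ (Fin n) => x i) h
    exact absurd h2 (ne_of_gt (hν i))
  have hXpos : (0:ℝ) < ‖ρC‖ := norm_pos_iff.2 (hρ_ne C hC)
  have hYpos : (0:ℝ) < ‖ρD‖ := norm_pos_iff.2 (hρ_ne D hD)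
  have hWpos : (0:ℝ) < ‖ν‖ := norm_pos_iff.2 hν0
  have hinner_rho : ∀ S : Finset (Fin n), ⟪ν, rho ν S⟫ = ‖rho ν S‖ ^ 2 := by
    intro S
    rw [← real_inner_self_eq_norm_sq, euclid_inner_eq, euclid_inner_eq]
    apply Finset.sum_congr rfl
    intro i _
    by_cases hi : i ∈ S <;> simp [rho, hi]
  have hproj_ne : ∀ h : Fin (d+1), eigProj A (μ h) ρC ≠ 0 := by
    intro h
    have hm : μ h ∈ evloc A ν C := by rw [← hμr]; exact Set.mem_range_self h
    exact hm
  have hlam_bound : ∀ h : Fin (d+1), μ h ≤ lam0 := fun h =>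
    eig_le_lam0 hn hν hPerron (eigProj_mem' A (μ h) ρC) (hproj_ne h)
  have hlam_mem : lam0 ∈ Set.range μ := by
    rw [hμr]
    show eigProj A lam0 (rho ν C) ≠ 0
    rw [eigProj_lam0 hn hconn hν hPerron]
    apply smul_ne_zero _ hν0
    rw [hinner_rho C]
    have : (0:ℝ) < ‖rho ν C‖ ^ 2 / ‖ν‖ ^ 2 := by positivity
    exact ne_of_gt this
  have hμ0 : μ 0 = lam0 := by
    obtain ⟨k, hk⟩ := hlam_mem
    refine le_antisymm (hlam_bound 0) ?_
    rw [← hk]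
    exact hμa.antitone (Fin.zero_le k)
  have hI0 : ⟪eigProj A (μ 0) ρC, eigProj A (μ 0) ρD⟫ = ‖ρC‖^2 * ‖ρD‖^2 / ‖ν‖^2 := by
    rw [hμ0, hρCdef, hρDdef, eigProj_lam0 hn hconn hν hPerron,
      eigProj_lam0 hn hconn hν hPerron, real_inner_smul_left, real_inner_smul_right,
      hinner_rho C, hinner_rho D, real_inner_self_eq_norm_sq]
    field_simp
  set Q : Fin (d+1) → Polynomial ℝ :=
    fun l0 => ∏ h ∈ Finset.univ.erase l0, (Polynomial.X - Polynomial.C (μ h)) with hQdef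
  have hQmonic : ∀ l0, (Q l0).Monic := fun l0 =>
    monic_prod_of_monic _ _ fun h _ => monic_X_sub_C _
  have hQdeg : ∀ l0, (Q l0).natDegree = d := by
    intro l0
    rw [hQdef]
    rw [Polynomial.natDegree_prod_of_monic _ _ fun h _ => monic_X_sub_C _]
    simp only [Polynomial.natDegree_X_sub_C, Finset.sum_const, smul_eq_mul, mul_one]
    rw [Finset.card_erase_of_mem (Finset.mem_univ l0)]
    simp
  have hT : ∀ l0 : Fin (d+1), ⟪mv (A ^ d) ρC, ρD⟫
      = (Q l0).eval (μ l0) * ⟪eigProj A (μ l0) ρC, eigProj A (μ l0) ρD⟫ := by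
    intro l0
    rw [← inner_monic_pow (hQmonic l0) (hQdeg l0) ρC ρD
      (fun k hk => by rw [hρCdef, hρDdef, hDdef]; exact inner_pow_vanish ν hk)]
    rw [inner_aeval_decomp hA]
    apply Finset.sum_eq_single_of_mem
    · exact eigProj_ne_imp_mem hA (hproj_ne l0)
    · intro κ hκ hne
      by_cases hz : eigProj A κ ρC = 0
      · rw [hz, inner_zero_left, mul_zero]
      · have hmem : κ ∈ Set.range μ := by
          rw [hμr]
          exact hz
        obtain ⟨h, hh⟩ := hmem
        have hhl : h ≠ l0 := fun he => hne (by rw [← hh, he])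
        rw [← hh, hQdef, Polynomial.eval_prod,
          Finset.prod_eq_zero (Finset.mem_erase.2 ⟨hhl, Finset.mem_univ h⟩) (by simp),
          zero_mul]
  have habs_eval : ∀ l0, |(Q l0).eval (μ l0)| = piC μ l0 := by
    intro l0
    rw [hQdef, Polynomial.eval_prod, Finset.abs_prod, piC]
    exact Finset.prod_congr rfl fun h _ => by simp
  have heval0 : (Q 0).eval (μ 0) = piC μ 0 := by
    rw [hQdef, Polynomial.eval_prod, piC]
    apply Finset.prod_congr rfl
    intro h hh
    have h0 : (0 : Fin (d+1)) < h :=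
      Fin.pos_iff_ne_zero.2 (Finset.mem_erase.1 hh).1
    have hlt : μ h < μ 0 := hμa h0
    rw [Polynomial.eval_sub, Polynomial.eval_X, Polynomial.eval_C,
      abs_of_pos (sub_pos.2 hlt)]
  have hpiC_pos : ∀ l0, 0 < piC μ l0 := by
    intro l0
    rw [piC]
    apply Finset.prod_pos
    intro h hh
    exact abs_pos.2 (sub_ne_zero.2 (hμa.injective.ne (Ne.symm (Finset.mem_erase.1 hh).1)))
  have hmloc : ∀ (S : Finset (Fin n)) (κ : ℝ),
      mloc A ν S κ = ‖eigProj A κ (rho ν S)‖^2 / ‖rho ν S‖^2 := by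
    intro S κ
    rw [mloc, unitVec, eigProj_smul, norm_smul, mul_pow, norm_inv, norm_norm, inv_pow,
      ← div_eq_inv_mul]
  set a := ‖eigProj A (μ l) ρC‖ with hadef
  set b := ‖eigProj A (μ l) ρD‖ with hbdef
  have hkey : piC μ 0 * (‖ρC‖^2 * ‖ρD‖^2) ≤ piC μ l * (a * b) * ‖ν‖^2 := by
    have h1 : ⟪mv (A ^ d) ρC, ρD⟫ = piC μ 0 * (‖ρC‖^2 * ‖ρD‖^2 / ‖ν‖^2) := by
      rw [hT 0, heval0, hI0]
    have hT0nn : (0:ℝ) ≤ ⟪mv (A ^ d) ρC, ρD⟫ := by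
      rw [h1]
      have := hpiC_pos 0
      positivity
    have h2 : |⟪mv (A ^ d) ρC, ρD⟫|
        = piC μ l * |⟪eigProj A (μ l) ρC, eigProj A (μ l) ρD⟫| := by
      rw [hT l, abs_mul, habs_eval l]
    have h3 : |⟪eigProj A (μ l) ρC, eigProj A (μ l) ρD⟫| ≤ a * b :=
      abs_real_inner_le_norm _ _
    have h4 : piC μ 0 * (‖ρC‖^2 * ‖ρD‖^2 / ‖ν‖^2) ≤ piC μ l * (a * b) := by
      calc piC μ 0 * (‖ρC‖^2 * ‖ρD‖^2 / ‖ν‖^2)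
          = ⟪mv (A ^ d) ρC, ρD⟫ := h1.symm
        _ = |⟪mv (A ^ d) ρC, ρD⟫| := (abs_of_nonneg hT0nn).symm
        _ = piC μ l * |⟪eigProj A (μ l) ρC, eigProj A (μ l) ρD⟫| := h2
        _ ≤ piC μ l * (a * b) := mul_le_mul_of_nonneg_left h3 (le_of_lt (hpiC_pos l))
    have hW2 : (0:ℝ) < ‖ν‖^2 := by positivity
    calc piC μ 0 * (‖ρC‖^2 * ‖ρD‖^2)
        = piC μ 0 * (‖ρC‖^2 * ‖ρD‖^2 / ‖ν‖^2) * ‖ν‖^2 := by field_simp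
      _ ≤ piC μ l * (a * b) * ‖ν‖^2 := mul_le_mul_of_nonneg_right h4 (le_of_lt hW2)
  rw [hmloc C (μ l), hmloc D (μ l), ← hρCdef, ← hρDdef, ← hadef, ← hbdef]
  rw [div_mul_div_comm, div_mul_div_comm,
    div_le_div_iff₀ (mul_pos (pow_pos (hpiC_pos l) 2) (by positivity))
      (mul_pos (pow_pos hXpos 2) (pow_pos hYpos 2))]
  have hP0 : (0:ℝ) ≤ piC μ 0 * (‖ρC‖^2 * ‖ρD‖^2) := by
    have := hpiC_pos 0
    positivity
  have hsq := mul_self_le_mul_self hP0 hkey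
  nlinarith [hsq]
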